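/- If (T_n) is a sequence of self-adjoint operators whose Riesz transforms converge in operator norm, F(T_n) → F(T), then the resolvents converge in operator norm: (T_n + i)^{-1} → (T + i)^{-1}. In other words, the Riesz metric is stronger than the graph (gap) metric on self-adjoint operators. -/

import Mathlib

open Complex Set MeasureTheory Filter Topology

noncomputable section

/-- A (possibly unbounded) self-adjoint operator on `H`, encoded together with its
Borel functional calculus: `op` is the operator itself (a densely defined symmetric
partial linear map), `phi` is the Borel functional calculus `f ↦ f(op)`, a star algebra
homomorphism from bounded Borel functions (encoded as arbitrary functions `ℝ → ℂ`;
`phi` is only used on bounded functions) into bounded operators, contractive with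
respect to the sup norm, and compatible with `op` in the sense that
`phi (fun t => (t+i)⁻¹)` is the resolvent `(op + i)⁻¹`. -/
structure SAOp (H : Type*) [NormedAddCommGroup H] [InnerProductSpace ℂ H]
    [CompleteSpace H] where
  op : H →ₗ.[ℂ] H
  dense_dom : Dense (op.domain : Set H)
  symm : ∀ x y : op.domain, (inner ℂ (op x) (y : H) : ℂ) = inner ℂ (x : H) (op y)
  phi : (ℝ → ℂ) →⋆ₐ[ℂ] (H →L[ℂ] H)
  norm_le : ∀ (f : ℝ → ℂ) (C : ℝ), 0 ≤ C → (∀ x, ‖f x‖ ≤ C) → ‖phi f‖ ≤ C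
  res_mem : ∀ x : H, phi (fun t => ((t : ℂ) + Complex.I)⁻¹) x ∈ op.domain
  op_res_add : ∀ x : H,
    op ⟨phi (fun t => ((t : ℂ) + Complex.I)⁻¹) x, res_mem x⟩
      + Complex.I • phi (fun t => ((t : ℂ) + Complex.I)⁻¹) x = x
  res_op : ∀ y : op.domain,
    phi (fun t => ((t : ℂ) + Complex.I)⁻¹) (op y + Complex.I • (y : H)) = (y : H)

namespace SAOp

variable {H : Type*} [NormedAddCommGroup H] [InnerProductSpace ℂ H] [CompleteSpace H]

/-- The resolvent `(T + i)⁻¹`. -/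
def res (T : SAOp H) : H →L[ℂ] H := T.phi (fun t => ((t : ℂ) + Complex.I)⁻¹)

/-- The Riesz transform `F(T) = T (I + T²)^{-1/2}`. -/
def rieszF (T : SAOp H) : H →L[ℂ] H :=
  T.phi (fun t => (t : ℂ) / ((Real.sqrt (1 + t ^ 2) : ℝ) : ℂ))

/-- `(I + T²)⁻¹`. -/
def invOnePlusSq (T : SAOp H) : H →L[ℂ] H :=
  T.phi (fun t => (((1 + t ^ 2 : ℝ)) : ℂ)⁻¹)

/-- `(I + T²)^{-1/2} = |T + i|⁻¹`. -/
def invSqrt (T : SAOp H) : H →L[ℂ] H :=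
  T.phi (fun t => ((Real.sqrt (1 + t ^ 2) : ℝ) : ℂ)⁻¹)

/-- The spectral projection `1_{(l,∞)}(T)`. -/
def specProjGt (T : SAOp H) (l : ℝ) : H →L[ℂ] H :=
  T.phi (Set.indicator (Set.Ioi l) 1)

/-- The spectral projection `1_{[l,∞)}(T)`. -/
def specProjGe (T : SAOp H) (l : ℝ) : H →L[ℂ] H :=
  T.phi (Set.indicator (Set.Ici l) 1)

/-- The spectrum of `T` does not meet `s`. -/
def Avoids (T : SAOp H) (s : Set ℝ) : Prop := T.phi (Set.indicator s 1) = 0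

/-- `T` is a self-adjoint Fredholm operator: `0` is not in the essential spectrum,
i.e. some spectral projection `1_{(-ε,ε)}(T)` has finite rank. -/
def IsFredholm (T : SAOp H) : Prop :=
  ∃ ε > (0 : ℝ), FiniteDimensional ℂ
    (LinearMap.range ((T.phi (Set.indicator (Set.Ioo (-ε) ε) 1) : H →L[ℂ] H) : H →ₗ[ℂ] H))

end SAOp

/-- `P` is an orthogonal projection. -/
def IsOrthoProj {H : Type*} [NormedAddCommGroup H] [InnerProductSpace ℂ H]
    [CompleteSpace H] (P : H →L[ℂ] H) : Prop :=
  IsSelfAdjoint P ∧ IsIdempotentElem P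

/-- A linear map is Fredholm if its kernel and cokernel are finite dimensional. -/
def IsFredholmLM {M N : Type*} [AddCommGroup M] [Module ℂ M] [AddCommGroup N]
    [Module ℂ N] (f : M →ₗ[ℂ] N) : Prop :=
  FiniteDimensional ℂ (LinearMap.ker f) ∧ FiniteDimensional ℂ (N ⧸ LinearMap.range f)

/-- The Fredholm index of a linear map: `dim ker − dim coker`. -/
noncomputable def indexLM {M N : Type*} [AddCommGroup M] [Module ℂ M] [AddCommGroup N]
    [Module ℂ N] (f : M →ₗ[ℂ] N) : ℤ :=
  (Module.finrank ℂ (LinearMap.ker f) : ℤ) -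
    (Module.finrank ℂ (N ⧸ LinearMap.range f) : ℤ)

/-- For projections `P Q`, the operator `Q : ran P → ran Q`. -/
noncomputable def pairRestrict {H : Type*} [NormedAddCommGroup H]
    [InnerProductSpace ℂ H] (P Q : H →L[ℂ] H) :
    (LinearMap.range (P : H →ₗ[ℂ] H)) →ₗ[ℂ] (LinearMap.range (Q : H →ₗ[ℂ] H)) :=
  (Q : H →ₗ[ℂ] H).restrict (fun x _ => LinearMap.mem_range_self _ x)

/-- `(P,Q)` is a Fredholm pair of projections. -/
def IsFredholmPair {H : Type*} [NormedAddCommGroup H] [InnerProductSpace ℂ H]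
    (P Q : H →L[ℂ] H) : Prop := IsFredholmLM (pairRestrict P Q)

/-- The index `ind(P,Q)` of a pair of projections. -/
noncomputable def pairIndex {H : Type*} [NormedAddCommGroup H]
    [InnerProductSpace ℂ H] (P Q : H →L[ℂ] H) : ℤ := indexLM (pairRestrict P Q)

namespace RieszAux

/-- The function on `[-1,1]` such that `(t+i)⁻¹ = hfun (t/√(1+t²))`. -/
noncomputable def hfun (s : ℝ) : ℂ :=
  ((s * Real.sqrt (1 - s^2) : ℝ) : ℂ) - Complex.I * ((1 - s^2 : ℝ) : ℂ)

lemma key (t : ℝ) : ((t:ℂ) + Complex.I)⁻¹ = hfun (t / Real.sqrt (1 + t^2)) := by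
  have h1 : (0:ℝ) < 1 + t^2 := by positivity
  have hu : Real.sqrt (1 + t^2) > 0 := Real.sqrt_pos.2 h1
  have hu2 : Real.sqrt (1 + t^2) * Real.sqrt (1 + t^2) = 1 + t^2 := Real.mul_self_sqrt h1.le
  have hz2 : ((1 + t^2 : ℝ) : ℂ) ≠ 0 := by
    simp only [ne_eq, Complex.ofReal_eq_zero]; positivity
  have hs2 : 1 - (t / Real.sqrt (1 + t^2))^2 = 1 / (1 + t^2) := by field_simp; rw [Real.sq_sqrt h1.le]; ring
  have hss : Real.sqrt (1 - (t / Real.sqrt (1 + t^2))^2) = 1 / Real.sqrt (1 + t^2) := by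
    rw [hs2, one_div, Real.sqrt_inv, one_div]
  unfold hfun
  rw [hss, hs2]
  have h2 : (t / Real.sqrt (1 + t^2)) * (1 / Real.sqrt (1 + t^2)) = t / (1 + t^2) := by
    rw [div_mul_div_comm, mul_one, hu2]
  rw [h2]
  symm
  apply eq_inv_of_mul_eq_one_left
  push_cast
  have hC : ((1:ℂ) + (t:ℂ)^2) ≠ 0 := by push_cast at hz2; exact hz2
  field_simp
  ring_nf
  rw [Complex.I_sq]
  ring

lemma mem_Icc (t : ℝ) : t / Real.sqrt (1 + t^2) ∈ Icc (-1:ℝ) 1 := by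
  have h1 : (0:ℝ) < 1 + t^2 := by positivity
  have hu : Real.sqrt (1 + t^2) > 0 := Real.sqrt_pos.2 h1
  have habs : |t| ≤ Real.sqrt (1 + t^2) := by
    rw [← Real.sqrt_sq_eq_abs]
    exact Real.sqrt_le_sqrt (by nlinarith)
  have : |t / Real.sqrt (1 + t^2)| ≤ 1 := by
    rw [abs_div, abs_of_pos hu, div_le_one hu]; exact habs
  exact abs_le.mp this

lemma rapprox (g : ℝ → ℝ) (hg : Continuous g) {δ : ℝ} (hδ : 0 < δ) :
    ∃ p : Polynomial ℝ, ∀ s ∈ Icc (-1:ℝ) 1, |g s - p.eval s| < δ := by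
  have htop := polynomialFunctions_closure_eq_top (-1:ℝ) 1
  set G : C(Icc (-1:ℝ) 1, ℝ) := ⟨fun x => g x, hg.comp continuous_subtype_val⟩ with hGdef
  have hG : G ∈ closure ((polynomialFunctions (Icc (-1:ℝ) 1)) : Set C(Icc (-1:ℝ) 1, ℝ)) := by
    rw [← Subalgebra.topologicalClosure_coe, htop]
    trivial
  obtain ⟨q, hq_mem, hq_dist⟩ := Metric.mem_closure_iff.mp hG δ hδ
  rw [polynomialFunctions_coe] at hq_mem
  obtain ⟨p, hp⟩ := hq_mem
  refine ⟨p, fun s hs => ?_⟩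
  have hle := ContinuousMap.dist_apply_le_dist (f := G) (g := q) ⟨s, hs⟩
  have hq : q ⟨s, hs⟩ = p.eval s := by
    rw [← hp]; rfl
  have hGs : G ⟨s, hs⟩ = g s := rfl
  calc |g s - p.eval s| = dist (G ⟨s, hs⟩) (q ⟨s, hs⟩) := by
        rw [Real.dist_eq, hq, hGs]
    _ ≤ dist G q := hle
    _ < δ := hq_dist

lemma capprox (f : ℝ → ℂ) (hf : Continuous f) {ε : ℝ} (hε : 0 < ε) :
    ∃ P : Polynomial ℂ, ∀ s ∈ Icc (-1:ℝ) 1, ‖f s - P.eval (s:ℂ)‖ ≤ ε := by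
  obtain ⟨p₁, hp₁⟩ := rapprox (fun s => (f s).re) (Complex.continuous_re.comp hf) (half_pos hε)
  obtain ⟨p₂, hp₂⟩ := rapprox (fun s => (f s).im) (Complex.continuous_im.comp hf) (half_pos hε)
  refine ⟨p₁.map (algebraMap ℝ ℂ) + Polynomial.C Complex.I * p₂.map (algebraMap ℝ ℂ),
    fun s hs => ?_⟩
  have heval : ∀ p : Polynomial ℝ, (p.map (algebraMap ℝ ℂ)).eval (s:ℂ) = ((p.eval s : ℝ) : ℂ) := by
    intro p
    rw [show ((s:ℝ):ℂ) = algebraMap ℝ ℂ s from rfl, Polynomial.eval_map,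
      Polynomial.eval₂_at_apply]
    rfl
  have : f s - ((p₁.map (algebraMap ℝ ℂ) + Polynomial.C Complex.I * p₂.map (algebraMap ℝ ℂ)).eval
      (s:ℂ)) = (((f s).re - p₁.eval s : ℝ) : ℂ) + Complex.I * (((f s).im - p₂.eval s : ℝ) : ℂ) := by
    simp only [Polynomial.eval_add, Polynomial.eval_mul, Polynomial.eval_C, heval]
    apply Complex.ext <;> simp
  rw [this]
  calc ‖(((f s).re - p₁.eval s : ℝ) : ℂ) + Complex.I * (((f s).im - p₂.eval s : ℝ) : ℂ)‖
      ≤ ‖(((f s).re - p₁.eval s : ℝ) : ℂ)‖ + ‖Complex.I * (((f s).im - p₂.eval s : ℝ) : ℂ)‖ :=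
        norm_add_le _ _
    _ ≤ ε / 2 + ε / 2 := by
        rw [norm_mul, Complex.norm_I, one_mul, Complex.norm_real, Complex.norm_real]
        exact add_le_add (le_of_lt (hp₁ s hs)) (le_of_lt (hp₂ s hs))
    _ = ε := by ring

lemma hfun_continuous : Continuous hfun := by
  unfold hfun
  continuity

end RieszAux

/-- If the Riesz transforms of a sequence of self-adjoint operators
converge in norm, then the resolvents converge in norm: the Riesz metric is stronger
than the graph metric. -/
theorem statement1 {H : Type*} [NormedAddCommGroup H] [InnerProductSpace ℂ H]
    [CompleteSpace H] (T : ℕ → SAOp H) (T' : SAOp H)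
    (h : Tendsto (fun n => (T n).rieszF) atTop (𝓝 T'.rieszF)) :
    Tendsto (fun n => (T n).res) atTop (𝓝 T'.res) := by
  -- Setup
  have hfc := RieszAux.hfun_continuous
  rw [Metric.tendsto_atTop]
  intro ε hε
  obtain ⟨P, hP⟩ := RieszAux.capprox RieszAux.hfun hfc (show (0:ℝ) < ε/4 by linarith)
  have hconv0 : Tendsto (fun n => Polynomial.aeval (T n).rieszF P) atTop
      (𝓝 (Polynomial.aeval T'.rieszF P)) :=
    ((P.continuous_aeval).tendsto _).comp h
  -- the function defining the Riesz transform
  set ffn : ℝ → ℂ := fun t => (t : ℂ) / ((Real.sqrt (1 + t ^ 2) : ℝ) : ℂ) with hffn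
  have hffn_eq : ∀ t : ℝ, ffn t = ((t / Real.sqrt (1 + t^2) : ℝ) : ℂ) := by
    intro t; simp [hffn]
  -- aeval at the Riesz transform equals phi of the composed polynomial function
  have haev : ∀ T : SAOp H,
      Polynomial.aeval T.rieszF P = T.phi (fun t => P.eval (ffn t)) := by
    intro T
    have h1 : T.rieszF = T.phi.toAlgHom ffn := rfl
    rw [h1, Polynomial.aeval_algHom_apply]
    have h4 : Polynomial.aeval ffn P = (fun t => P.eval (ffn t)) := by
      funext t
      rw [Polynomial.aeval_fn_apply]
      simp [Polynomial.aeval_def]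
    rw [h4]
    rfl
  -- key estimate
  have est : ∀ T : SAOp H, ‖T.res - Polynomial.aeval T.rieszF P‖ ≤ ε/4 := by
    intro T
    have h2 : T.res - Polynomial.aeval T.rieszF P
        = T.phi (fun t : ℝ => ((t:ℂ) + Complex.I)⁻¹ - P.eval (ffn t)) := by
      rw [haev T]
      rw [show (fun t : ℝ => ((t:ℂ) + Complex.I)⁻¹ - P.eval (ffn t))
        = (fun t : ℝ => ((t:ℂ) + Complex.I)⁻¹) - (fun t : ℝ => P.eval (ffn t)) from rfl, map_sub]
      rfl
    rw [h2]
    apply T.norm_le _ _ (by linarith)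
    intro t
    rw [RieszAux.key t, hffn_eq t]
    exact hP _ (RieszAux.mem_Icc t)
  -- convergence of the polynomial part
  have hconv := hconv0
  rw [Metric.tendsto_atTop] at hconv
  obtain ⟨N, hN⟩ := hconv (ε/2) (by linarith)
  refine ⟨N, fun n hn => ?_⟩
  have h3 := hN n hn
  rw [dist_eq_norm] at h3 ⊢
  calc ‖(T n).res - T'.res‖
      = ‖((T n).res - Polynomial.aeval (T n).rieszF P)
        + (Polynomial.aeval (T n).rieszF P - Polynomial.aeval T'.rieszF P)
        + (Polynomial.aeval T'.rieszF P - T'.res)‖ := by congr 1; abel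
    _ ≤ ‖(T n).res - Polynomial.aeval (T n).rieszF P‖
        + ‖Polynomial.aeval (T n).rieszF P - Polynomial.aeval T'.rieszF P‖
        + ‖Polynomial.aeval T'.rieszF P - T'.res‖ := norm_add₃_le
    _ < ε/4 + ε/2 + ε/4 := by
        have e1 := est (T n)
        have e2 := est T'
        rw [norm_sub_rev] at e2
        linarith
    _ = ε := by ring
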